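/- arXiv:2310.04015 — 2 statements merged into one kernel-verified Lean document; each statement's English description precedes it below -/
import Mathlib

section
/- Let 0 < ψ_p ≤ ψ_d < 1, 0 ≤ ρ ≤ 1, σ > 0. Define Δ(s) = (1 − ψ_d)^{-1} / ((1 + s²)(1 − ψ_d + ψ_p)^{-1} − ρ s²) where s = r_s/σ ≥ 0 is SNR (assuming the denominator is positive). Then Δ is decreasing in s, and lim_{s→0} Δ(s) = (1 − ψ_d + ψ_p)/(1 − ψ_d) > 1. -/
open Filter Topology

/-- Case 1 gain: `Δ(s) = (1−ψ_d)⁻¹ / ((1+s²)(1−ψ_d+ψ_p)⁻¹ − ρ s²)` is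
decreasing in the SNR `s ≥ 0`, and `Δ(s) → (1−ψ_d+ψ_p)/(1−ψ_d) > 1` as `s → 0`. -/
theorem stmt6 (ψd ψp ρ : ℝ)
    (hψp0 : 0 < ψp) (hψp : ψp ≤ ψd) (hψd1 : ψd < 1)
    (hρ0 : 0 ≤ ρ) (hρ1 : ρ ≤ 1)
    (hden : ∀ s : ℝ, 0 ≤ s → 0 < (1 + s ^ 2) * (1 - ψd + ψp)⁻¹ - ρ * s ^ 2) :
    let Δ : ℝ → ℝ := fun s =>
      (1 - ψd)⁻¹ / ((1 + s ^ 2) * (1 - ψd + ψp)⁻¹ - ρ * s ^ 2)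
    AntitoneOn Δ (Set.Ici 0) ∧
    Tendsto Δ (𝓝[>] 0) (𝓝 ((1 - ψd + ψp) / (1 - ψd))) ∧
    1 < (1 - ψd + ψp) / (1 - ψd) := by
  intro Δ
  have hc0 : 0 < 1 - ψd + ψp := by linarith
  have hc1 : 1 - ψd + ψp ≤ 1 := by linarith
  have hu : 1 ≤ (1 - ψd + ψp)⁻¹ := by
    rw [le_inv_comm₀ one_pos hc0]; simpa using hc1
  have h1d : 0 < 1 - ψd := by linarith
  refine ⟨?_, ?_, ?_⟩
  · intro a ha b hb hab
    simp only [Set.mem_Ici] at ha hb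
    have hDa := hden a ha
    have hDb := hden b hb
    have hD : (1 + a ^ 2) * (1 - ψd + ψp)⁻¹ - ρ * a ^ 2 ≤
        (1 + b ^ 2) * (1 - ψd + ψp)⁻¹ - ρ * b ^ 2 := by
      nlinarith [sq_nonneg a, sq_nonneg b, mul_self_le_mul_self ha hab]
    exact div_le_div_of_nonneg_left (by positivity) hDa hD
  · have hcont : ContinuousAt Δ 0 := by
      apply ContinuousAt.div continuousAt_const (by fun_prop)
      have := hden 0 le_rfl
      linarith
    have h0 : Δ 0 = (1 - ψd + ψp) / (1 - ψd) := by
      show (1 - ψd)⁻¹ / ((1 + (0:ℝ) ^ 2) * (1 - ψd + ψp)⁻¹ - ρ * 0 ^ 2) = _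
      field_simp
      ring
    have : Tendsto Δ (𝓝[>] 0) (𝓝 (Δ 0)) := hcont.tendsto.mono_left nhdsWithin_le_nhds
    rwa [h0] at this
  · rw [lt_div_iff₀ h1d]; linarith
end

section
/- Let ψ_d > 1 and ψ_d − ψ_p ≤ 1 with ψ_p > 0, σ > 0, and suppose SNR² = (r_s/σ)² ≤ (1 + (ψ_d − 1)^{-1} − (1 − ψ_d + ψ_p)^{-1}) / ((1 − ψ_d + ψ_p)^{-1} + ψ_d^{-1} − 1). Then (ψ_d/(ψ_d−1) + (1 − 1/ψ_d)·SNR²) / ((1 + SNR²)/(1 − ψ_d + ψ_p)) ≥ 1. -/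
/-- Key inequality in Theorem 5: under the SNR condition (13), the limiting
gain `(ψ_d/(ψ_d−1) + (1 − 1/ψ_d)·SNR²) / ((1 + SNR²)/(1 − ψ_d + ψ_p))` is at least 1. -/
theorem stmt8 (ψd ψp σ rs : ℝ)
    (hψd : 1 < ψd) (hψ : ψd - ψp ≤ 1) (hψp : 0 < ψp) (hσ : 0 < σ) (hrs : 0 ≤ rs)
    (hsnr : (rs / σ) ^ 2 ≤
      (1 + (ψd - 1)⁻¹ - (1 - ψd + ψp)⁻¹) / ((1 - ψd + ψp)⁻¹ + ψd⁻¹ - 1)) :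
    1 ≤ (ψd / (ψd - 1) + (1 - 1 / ψd) * (rs / σ) ^ 2)
          / ((1 + (rs / σ) ^ 2) / (1 - ψd + ψp)) := by
  set s := (rs / σ) ^ 2 with hsdef
  have hs : 0 ≤ s := sq_nonneg _
  set q := 1 - ψd + ψp with hqdef
  have hψd0 : (0:ℝ) < ψd := by linarith
  have hψd1 : (0:ℝ) < ψd - 1 := by linarith
  have hψdinv : ψd⁻¹ < 1 := inv_lt_one_of_one_lt₀ hψd
  have hψdinv0 : (0:ℝ) < ψd⁻¹ := inv_pos.mpr hψd0
  have hψd1inv : (0:ℝ) < (ψd - 1)⁻¹ := inv_pos.mpr hψd1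
  have hq0 : 0 ≤ q := by simp only [hqdef]; linarith
  rcases eq_or_lt_of_le hq0 with hq | hq
  · -- q = 0 : contradiction with hsnr
    exfalso
    rw [← hq] at hsnr
    simp only [inv_zero, sub_zero, zero_add] at hsnr
    have : (1 + (ψd - 1)⁻¹) / (ψd⁻¹ - 1) < 0 :=
      div_neg_of_pos_of_neg (by linarith) (by linarith)
    linarith
  · rcases lt_trichotomy (q⁻¹ + ψd⁻¹ - 1) 0 with hD | hD | hD
    · -- D < 0 : numerator positive, so RHS of hsnr negative, contradiction
      exfalso
      have hqinv : q⁻¹ < 1 := by linarith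
      have hN : 0 < 1 + (ψd - 1)⁻¹ - q⁻¹ := by linarith
      have : (1 + (ψd - 1)⁻¹ - q⁻¹) / (q⁻¹ + ψd⁻¹ - 1) < 0 :=
        div_neg_of_pos_of_neg hN hD
      linarith
    · -- D = 0 : s = 0 and q = ψd/(ψd-1)
      have hs0 : s = 0 := le_antisymm (by rw [hD, div_zero] at hsnr; exact hsnr) hs
      have hqv : q * (ψd - 1) = ψd := by
        have hq' : q⁻¹ = 1 - ψd⁻¹ := by linarith
        have : q * q⁻¹ = 1 := mul_inv_cancel₀ (ne_of_gt hq)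
        rw [hq'] at this
        field_simp at this
        nlinarith [this]
      rw [hs0]
      have hpos : 0 < (1 + (0:ℝ)) / q := by positivity
      rw [le_div_iff₀ hpos, one_mul, div_le_iff₀ hq]
      have h1 : 1 < q := by nlinarith
      have h2 : 1 < ψd / (ψd - 1) := (one_lt_div hψd1).mpr (by linarith)
      nlinarith
    · -- D > 0 : main case
      have key : s * (q⁻¹ + ψd⁻¹ - 1) ≤ 1 + (ψd - 1)⁻¹ - q⁻¹ :=
        (le_div_iff₀ hD).mp hsnr
      have key2 : q * (s * (q⁻¹ + ψd⁻¹ - 1)) ≤ q * (1 + (ψd - 1)⁻¹ - q⁻¹) :=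
        mul_le_mul_of_nonneg_left key (le_of_lt hq)
      have hq' : q ≠ 0 := ne_of_gt hq
      have hψd' : ψd ≠ 0 := ne_of_gt hψd0
      have hψd1' : ψd - 1 ≠ 0 := ne_of_gt hψd1
      have hpos : 0 < (1 + s) / q := div_pos (by linarith) hq
      rw [le_div_iff₀ hpos, one_mul, div_le_iff₀ hq]
      field_simp at key2 ⊢
      have hq2 : 0 < q * q := mul_pos hq hq
      have key3 : s * (ψd + q - q * ψd) * (ψd - 1) ≤ (ψd * q - (ψd - 1)) * ψd := by
        nlinarith [key2, hq2]
      linarith [key3]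
end
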